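/- (Milne's refinement of Craig interpolation for classical propositional logic.) Classical logic CL enjoys (K, LP)-interpolation: if φ ⊢_CL ψ then there is a formula χ such that every atom occurring in χ occurs in both φ and ψ, φ ⊢_K χ, and χ ⊢_LP ψ. -/

import Mathlib

/-- Propositional formulas: atoms, conjunction, disjunction, De Morgan negation, ⊤, ⊥. -/
inductive Fm : Type where
  | atom : ℕ → Fm
  | conj : Fm → Fm → Fm
  | disj : Fm → Fm → Fm
  | neg  : Fm → Fm
  | top  : Fm
  | bot  : Fm
deriving DecidableEq

/-- The atom `i` occurs in a formula. -/
def occurs (i : ℕ) : Fm → Prop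
  | .atom j => i = j
  | .conj φ ψ => occurs i φ ∨ occurs i ψ
  | .disj φ ψ => occurs i φ ∨ occurs i ψ
  | .neg φ => occurs i φ
  | .top => False
  | .bot => False

/-- The four elements of the De Morgan algebra B4. -/
inductive B4 : Type where
  | f | n | b | t
deriving DecidableEq

/-- Meet in the truth order of B4 (bottom `f`, top `t`, `n` and `b` incomparable). -/
def bmeet : B4 → B4 → B4
  | .f, _ => .f
  | _, .f => .f
  | .t, x => x
  | x, .t => x
  | .n, .n => .n
  | .b, .b => .b
  | .n, .b => .f
  | .b, .n => .f

/-- Join in the truth order of B4. -/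
def bjoin : B4 → B4 → B4
  | .t, _ => .t
  | _, .t => .t
  | .f, x => x
  | x, .f => x
  | .n, .n => .n
  | .b, .b => .b
  | .n, .b => .t
  | .b, .n => .t

/-- De Morgan negation on B4: swaps `f` and `t`, fixes `n` and `b`. -/
def bneg : B4 → B4
  | .f => .t
  | .t => .f
  | .n => .n
  | .b => .b

/-- The information order ⊑ on B4: bottom `n`, top `b`, `f` and `t` incomparable. -/
def infoLe (x y : B4) : Prop := x = y ∨ x = B4.n ∨ y = B4.b

/-- Evaluation of a formula in B4 under an atom assignment (the unique homomorphic
extension of the valuation of atoms). -/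
def evalv (v : ℕ → B4) : Fm → B4
  | .atom j => v j
  | .conj φ ψ => bmeet (evalv v φ) (evalv v ψ)
  | .disj φ ψ => bjoin (evalv v φ) (evalv v ψ)
  | .neg φ => bneg (evalv v φ)
  | .top => .t
  | .bot => .f

/-- Designated values of the matrices B4 and LP3: `t` and `b`. -/
def desB (x : B4) : Prop := x = B4.t ∨ x = B4.b

/-- Consequence over the matrix B4 (designated values {t, b}): the Dunn–Belnap logic B. -/
def Bcon (Γ : Set Fm) (φ : Fm) : Prop :=
  ∀ v : ℕ → B4, (∀ γ ∈ Γ, desB (evalv v γ)) → desB (evalv v φ)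

/-- Consequence over the submatrix LP3 on {f, b, t} (designated {t, b}): the Logic of Paradox. -/
def LPcon (Γ : Set Fm) (φ : Fm) : Prop :=
  ∀ v : ℕ → B4, (∀ j, v j ≠ B4.n) → (∀ γ ∈ Γ, desB (evalv v γ)) → desB (evalv v φ)

/-- Consequence over the submatrix K3 on {f, n, t} (designated {t}): strong Kleene logic. -/
def Kcon (Γ : Set Fm) (φ : Fm) : Prop :=
  ∀ v : ℕ → B4, (∀ j, v j ≠ B4.b) → (∀ γ ∈ Γ, evalv v γ = B4.t) → evalv v φ = B4.t

/-- Consequence over the matrix ETL4 (the algebra B4 with designated set {t}): Exactly True Logic. -/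
def ETLcon (Γ : Set Fm) (φ : Fm) : Prop :=
  ∀ v : ℕ → B4, (∀ γ ∈ Γ, evalv v γ = B4.t) → evalv v φ = B4.t

/-- Consequence over the Boolean submatrix on {f, t} (designated {t}): classical logic CL. -/
def CLcon (Γ : Set Fm) (φ : Fm) : Prop :=
  ∀ v : ℕ → B4, (∀ j, v j = B4.f ∨ v j = B4.t) →
    (∀ γ ∈ Γ, evalv v γ = B4.t) → evalv v φ = B4.t

section MilneAux

instance : Fintype B4 :=
  ⟨⟨{B4.f, B4.n, B4.b, B4.t}, by decide⟩, fun x => by cases x <;> decide⟩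

instance instDecInfoLe : ∀ x y : B4, Decidable (infoLe x y) := fun x y => by
  unfold infoLe; infer_instance

/-- list of atoms occurring in a formula -/
def atomList : Fm → List ℕ
  | .atom j => [j]
  | .conj a b => atomList a ++ atomList b
  | .disj a b => atomList a ++ atomList b
  | .neg a => atomList a
  | .top => []
  | .bot => []

lemma occurs_iff_mem (i : ℕ) (θ : Fm) : occurs i θ ↔ i ∈ atomList θ := by
  induction θ <;> simp [occurs, atomList, *]

lemma bmeet_mono : ∀ {x x' y y' : B4}, infoLe x x' → infoLe y y' →
    infoLe (bmeet x y) (bmeet x' y') := by decide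

lemma bjoin_mono : ∀ {x x' y y' : B4}, infoLe x x' → infoLe y y' →
    infoLe (bjoin x y) (bjoin x' y') := by decide

lemma bneg_mono : ∀ {x x' : B4}, infoLe x x' → infoLe (bneg x) (bneg x') := by decide

lemma eval_mono {θ : Fm} {v w : ℕ → B4} (h : ∀ j, occurs j θ → infoLe (v j) (w j)) :
    infoLe (evalv v θ) (evalv w θ) := by
  induction θ with
  | atom j => exact h j rfl
  | conj a b iha ihb =>
      exact bmeet_mono (iha fun j hj => h j (Or.inl hj)) (ihb fun j hj => h j (Or.inr hj))
  | disj a b iha ihb =>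
      exact bjoin_mono (iha fun j hj => h j (Or.inl hj)) (ihb fun j hj => h j (Or.inr hj))
  | neg a iha => exact bneg_mono (iha fun j hj => h j hj)
  | top => exact Or.inl rfl
  | bot => exact Or.inl rfl

lemma eval_congr {θ : Fm} {v w : ℕ → B4} (h : ∀ j, occurs j θ → v j = w j) :
    evalv v θ = evalv w θ := by
  induction θ with
  | atom j => exact h j rfl
  | conj a b iha ihb =>
      simp [evalv, iha fun j hj => h j (Or.inl hj), ihb fun j hj => h j (Or.inr hj)]
  | disj a b iha ihb =>
      simp [evalv, iha fun j hj => h j (Or.inl hj), ihb fun j hj => h j (Or.inr hj)]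
  | neg a iha => simp [evalv, iha fun j hj => h j hj]
  | top => rfl
  | bot => rfl

lemma eval_ne_b {θ : Fm} {v : ℕ → B4} (h : ∀ j, v j ≠ B4.b) : evalv v θ ≠ B4.b := by
  have hm : ∀ x y : B4, x ≠ B4.b → y ≠ B4.b → bmeet x y ≠ B4.b := by decide
  have hj : ∀ x y : B4, x ≠ B4.b → y ≠ B4.b → bjoin x y ≠ B4.b := by decide
  have hn : ∀ x : B4, x ≠ B4.b → bneg x ≠ B4.b := by decide
  induction θ with
  | atom j => exact h j
  | conj a b iha ihb => exact hm _ _ iha ihb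
  | disj a b iha ihb => exact hj _ _ iha ihb
  | neg a iha => exact hn _ iha
  | top => simp [evalv]
  | bot => simp [evalv]

lemma eval_classical {θ : Fm} {v : ℕ → B4} (h : ∀ j, v j = B4.f ∨ v j = B4.t) :
    evalv v θ = B4.f ∨ evalv v θ = B4.t := by
  have hm : ∀ x y : B4, (x = B4.f ∨ x = B4.t) → (y = B4.f ∨ y = B4.t) →
      (bmeet x y = B4.f ∨ bmeet x y = B4.t) := by decide
  have hj : ∀ x y : B4, (x = B4.f ∨ x = B4.t) → (y = B4.f ∨ y = B4.t) →
      (bjoin x y = B4.f ∨ bjoin x y = B4.t) := by decide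
  have hn : ∀ x : B4, (x = B4.f ∨ x = B4.t) → (bneg x = B4.f ∨ bneg x = B4.t) := by decide
  induction θ with
  | atom j => exact h j
  | conj a b iha ihb => exact hm _ _ iha ihb
  | disj a b iha ihb => exact hj _ _ iha ihb
  | neg a iha => exact hn _ iha
  | top => exact Or.inr rfl
  | bot => exact Or.inl rfl

/-- conflation: swaps `n` and `b`, fixes `f` and `t`. -/
def confl : B4 → B4
  | .n => .b
  | .b => .n
  | .f => .f
  | .t => .t

lemma eval_confl (θ : Fm) (v : ℕ → B4) :
    evalv (fun j => confl (v j)) θ = confl (evalv v θ) := by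
  have hm : ∀ x y : B4, bmeet (confl x) (confl y) = confl (bmeet x y) := by decide
  have hj : ∀ x y : B4, bjoin (confl x) (confl y) = confl (bjoin x y) := by decide
  have hn : ∀ x : B4, bneg (confl x) = confl (bneg x) := by decide
  induction θ with
  | atom j => rfl
  | conj a b iha ihb => simp [evalv, iha, ihb, hm]
  | disj a b iha ihb => simp [evalv, iha, ihb, hj]
  | neg a iha => simp [evalv, iha, hn]
  | top => rfl
  | bot => rfl

/-- big disjunction -/
def bigDisj : List Fm → Fm
  | [] => .bot
  | c :: l => .disj c (bigDisj l)

lemma bigDisj_t {v : ℕ → B4} : ∀ {l : List Fm}, (∃ c ∈ l, evalv v c = B4.t) →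
    evalv v (bigDisj l) = B4.t := by
  intro l
  induction l with
  | nil => rintro ⟨c, hc, -⟩; simp at hc
  | cons a l ih =>
      rintro ⟨c, hc, hct⟩
      rcases List.mem_cons.mp hc with rfl | hc
      · simp [bigDisj, evalv, hct, bjoin]
      · have := ih ⟨c, hc, hct⟩
        have ht : ∀ x : B4, bjoin x B4.t = B4.t := by decide
        simp [bigDisj, evalv, this, ht]

lemma bigDisj_f {v : ℕ → B4} : ∀ {l : List Fm}, (∀ c ∈ l, evalv v c = B4.f) →
    evalv v (bigDisj l) = B4.f := by
  intro l
  induction l with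
  | nil => intro; rfl
  | cons a l ih =>
      intro hl
      have ha := hl a (List.mem_cons_self (a := a) (l := l))
      have := ih fun c hc => hl c (List.mem_cons_of_mem a hc)
      simp [bigDisj, evalv, ha, this, bjoin]

lemma occurs_bigDisj {i : ℕ} : ∀ {l : List Fm}, occurs i (bigDisj l) →
    ∃ c ∈ l, occurs i c := by
  intro l
  induction l with
  | nil => intro hcontra; exact absurd hcontra (by simp [bigDisj, occurs])
  | cons a l ih =>
      intro hcontra
      rcases hcontra with h1 | h2
      · exact ⟨a, List.mem_cons_self (a := a) (l := l), h1⟩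
      · obtain ⟨c, hc, hoc⟩ := ih h2
        exact ⟨c, List.mem_cons_of_mem a hc, hoc⟩

/-- all K3 assignments supported on a list of atoms -/
def asgs : List ℕ → List (ℕ → B4)
  | [] => [fun _ => B4.n]
  | p :: L => (asgs L).flatMap (fun u => [u, Function.update u p B4.t, Function.update u p B4.f])

lemma asgs_exists (v : ℕ → B4) : ∀ L : List ℕ,
    ∃ u ∈ asgs L, (∀ p ∈ L, u p = v p ∨ (v p = B4.b ∧ u p = B4.n)) ∧ (∀ q, q ∉ L → u q = B4.n) := by
  intro L
  induction L with
  | nil => exact ⟨fun _ => B4.n, by simp [asgs], by simp, fun q _ => rfl⟩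
  | cons p L ih =>
      obtain ⟨u, hu, h1, h2⟩ := ih
      by_cases hvp : v p = B4.n ∨ v p = B4.b
      · refine ⟨u, ?_, ?_, ?_⟩
        · simp [asgs, List.mem_flatMap]; exact ⟨u, hu, Or.inl rfl⟩
        · intro q hq
          rcases List.mem_cons.mp hq with rfl | hq
          · by_cases hqL : q ∈ L
            · exact h1 q hqL
            · rcases hvp with h | h
              · exact Or.inl ((h2 q hqL).trans h.symm)
              · exact Or.inr ⟨h, h2 q hqL⟩
          · exact h1 q hq
        · intro q hq
          exact h2 q (fun hqL => hq (List.mem_cons_of_mem p hqL))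
      · push_neg at hvp
        refine ⟨Function.update u p (v p), ?_, ?_, ?_⟩
        · simp only [asgs, List.mem_flatMap]
          refine ⟨u, hu, ?_⟩
          rcases (by cases hx : v p <;> simp_all : v p = B4.f ∨ v p = B4.t) with h | h <;>
            rw [h] <;> simp
        · intro q hq
          rcases eq_or_ne q p with rfl | hqp
          · simp [Function.update]
          · rw [Function.update_of_ne hqp]
            rcases List.mem_cons.mp hq with rfl | hq
            · exact absurd rfl hqp
            · exact h1 q hq
        · intro q hq
          have hqp : q ≠ p := fun h => hq (h ▸ List.mem_cons_self (a := p) (l := L))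
          rw [Function.update_of_ne hqp]
          exact h2 q (fun hqL => hq (List.mem_cons_of_mem p hqL))

/-- conjunction of literals determined by `u` on the atoms of `L` -/
def cOfL (u : ℕ → B4) : List ℕ → Fm
  | [] => .top
  | p :: L =>
      if u p = B4.t then .conj (.atom p) (cOfL u L)
      else if u p = B4.f then .conj (.neg (.atom p)) (cOfL u L)
      else cOfL u L

lemma occurs_cOfL {i : ℕ} {u : ℕ → B4} : ∀ {L : List ℕ}, occurs i (cOfL u L) → i ∈ L := by
  intro L
  induction L with
  | nil => intro hcontra; exact absurd hcontra (by simp [cOfL, occurs])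
  | cons p L ih =>
      intro hc
      simp only [cOfL] at hc
      split_ifs at hc with h1 h2
      · rcases hc with h | h
        · exact List.mem_cons.mpr (Or.inl h)
        · exact List.mem_cons_of_mem p (ih h)
      · rcases hc with h | h
        · exact List.mem_cons.mpr (Or.inl h)
        · exact List.mem_cons_of_mem p (ih h)
      · exact List.mem_cons_of_mem p (ih hc)

lemma cOfL_eval_t {v u : ℕ → B4}
    (h : ∀ p, (u p = B4.t → v p = B4.t) ∧ (u p = B4.f → v p = B4.f)) :
    ∀ L : List ℕ, evalv v (cOfL u L) = B4.t := by
  intro L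
  induction L with
  | nil => rfl
  | cons p L ih =>
      simp only [cOfL]
      split_ifs with h1 h2
      · simp [evalv, (h p).1 h1, ih, bmeet]
      · simp [evalv, (h p).2 h2, ih, bneg, bmeet]
      · exact ih

lemma cOfL_compat {v u : ℕ → B4} (hv : ∀ j, v j ≠ B4.b) :
    ∀ {L : List ℕ}, evalv v (cOfL u L) ≠ B4.f →
      ∀ p ∈ L, u p = B4.n ∨ u p = B4.b ∨ v p = B4.n ∨ u p = v p := by
  have hmf1 : ∀ x y : B4, bmeet x y ≠ B4.f → x ≠ B4.f ∧ y ≠ B4.f := by decide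
  intro L
  induction L with
  | nil => intro _ p hp; simp at hp
  | cons q L ih =>
      intro hne p hp
      simp only [cOfL] at hne
      split_ifs at hne with h1 h2
      · simp only [evalv] at hne
        obtain ⟨ha, hb⟩ := hmf1 _ _ hne
        rcases List.mem_cons.mp hp with rfl | hp
        · rcases (by have := hv p; cases hx : v p <;> simp_all :
              v p = B4.n ∨ v p = B4.t) with hx | hx
          · exact Or.inr (Or.inr (Or.inl hx))
          · exact Or.inr (Or.inr (Or.inr (h1.trans hx.symm)))
        · exact ih hb p hp
      · simp only [evalv] at hne
        obtain ⟨ha, hb⟩ := hmf1 _ _ hne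
        rcases List.mem_cons.mp hp with rfl | hp
        · have hvt : v p ≠ B4.t := fun hx => ha (by rw [hx]; rfl)
          rcases (by have := hv p; cases hx : v p <;> simp_all :
              v p = B4.n ∨ v p = B4.f) with hx | hx
          · exact Or.inr (Or.inr (Or.inl hx))
          · exact Or.inr (Or.inr (Or.inr (h2.trans hx.symm)))
        · exact ih hb p hp
      · rcases List.mem_cons.mp hp with rfl | hp
        · rcases (by cases hx : u p <;> simp_all : u p = B4.n ∨ u p = B4.b) with hx | hx
          · exact Or.inl hx
          · exact Or.inr (Or.inl hx)
        · exact ih hne p hp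

end MilneAux


/-- Milne's refinement of the Craig interpolation theorem: classical logic CL enjoys
(K, LP)-interpolation. -/
theorem stmt18 (φ ψ : Fm) (h : CLcon {φ} ψ) :
    ∃ χ : Fm, (∀ i, occurs i χ → occurs i φ ∧ occurs i ψ) ∧
      Kcon {φ} χ ∧ LPcon {χ} ψ := by
  classical
  set L : List ℕ := (atomList φ).filter (fun p => decide (p ∈ atomList ψ)) with hLdef
  have hLmem : ∀ p, p ∈ L ↔ (occurs p φ ∧ occurs p ψ) := by
    intro p
    simp [hLdef, List.mem_filter, occurs_iff_mem]
  set T : (ℕ → B4) → Prop := fun u => ∃ w : ℕ → B4, (∀ j, w j ≠ B4.b) ∧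
    (∀ p ∈ L, w p = u p) ∧ evalv w φ = B4.t with hTdef
  refine ⟨bigDisj (((asgs L).filter (fun u => decide (T u))).map (fun u => cOfL u L)),
    ?_, ?_, ?_⟩
  · -- atom condition
    intro i hi
    obtain ⟨c, hc, hoc⟩ := occurs_bigDisj hi
    obtain ⟨u, _, rfl⟩ := List.mem_map.mp hc
    exact (hLmem i).mp (occurs_cOfL hoc)
  · -- Kcon {φ} χ
    intro v hv hΓ
    have hφ : evalv v φ = B4.t := hΓ φ rfl
    obtain ⟨u, hu, h1, h2⟩ := asgs_exists v L
    have h1' : ∀ p ∈ L, u p = v p := by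
      intro p hp
      rcases h1 p hp with hpq | ⟨hb, _⟩
      · exact hpq
      · exact absurd hb (hv p)
    have hTu : T u := ⟨v, hv, fun p hp => (h1' p hp).symm, hφ⟩
    apply bigDisj_t
    refine ⟨cOfL u L, List.mem_map.mpr ⟨u, List.mem_filter.mpr ⟨hu, by simp [hTu]⟩, rfl⟩, ?_⟩
    apply cOfL_eval_t
    intro p
    by_cases hpL : p ∈ L
    · rw [h1' p hpL]
      exact ⟨fun hx => hx, fun hx => hx⟩
    · rw [h2 p hpL]
      exact ⟨fun hx => absurd hx (by decide), fun hx => absurd hx (by decide)⟩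
  · -- LPcon {χ} ψ
    intro v hvn hΓ
    have hχd := hΓ _ rfl
    set v' : ℕ → B4 := fun j => confl (v j) with hv'def
    have hv'K : ∀ j, v' j ≠ B4.b := by
      intro j
      have := hvn j
      simp only [hv'def]
      cases hvj : v j <;> simp_all [confl]
    have hvv' : (fun j => confl (v' j)) = v := by
      funext j
      simp only [hv'def]
      cases v j <;> rfl
    have hve : ∀ θ : Fm, evalv v θ = confl (evalv v' θ) := by
      intro θ
      conv_lhs => rw [← hvv']
      exact eval_confl θ v'
    have hχ' : evalv v' (bigDisj (((asgs L).filter (fun u => decide (T u))).map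
        (fun u => cOfL u L))) ≠ B4.f := by
      intro hf
      rw [hve, hf] at hχd
      rcases hχd with hx | hx <;> simp [confl] at hx
    have hψ' : evalv v' ψ ≠ B4.f := by
      intro hψf
      apply hχ'
      apply bigDisj_f
      intro c hc
      obtain ⟨u, hu, rfl⟩ := List.mem_map.mp hc
      have hTu : T u := of_decide_eq_true (List.mem_filter.mp hu).2
      by_contra hne
      obtain ⟨w, hwK, hwL, hwφ⟩ := hTu
      have compat := cOfL_compat hv'K hne
      -- merged valuation
      set m : ℕ → B4 := fun j =>
        if j ∈ atomList φ then
          (if v' j = B4.n then w j else if j ∈ atomList ψ then v' j else w j)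
        else v' j with hmdef
      have hmK : ∀ j, m j ≠ B4.b := by
        intro j
        simp only [hmdef]
        split_ifs <;> first | exact hwK j | exact hv'K j
      have hwm : ∀ j, occurs j φ → infoLe (w j) (m j) := by
        intro j hj
        have hjφ : j ∈ atomList φ := (occurs_iff_mem j φ).mp hj
        simp only [hmdef, if_pos hjφ]
        by_cases hn1 : v' j = B4.n
        · rw [if_pos hn1]; exact Or.inl rfl
        · rw [if_neg hn1]
          by_cases hn2 : j ∈ atomList ψ
          · rw [if_pos hn2]
            have hjL : j ∈ L := (hLmem j).mpr ⟨hj, (occurs_iff_mem j ψ).mpr hn2⟩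
            rcases compat j hjL with hx | hx | hx | hx
            · exact Or.inr (Or.inl ((hwL j hjL).trans hx))
            · exact absurd ((hwL j hjL).trans hx) (hwK j)
            · exact absurd hx hn1
            · exact Or.inl ((hwL j hjL).trans hx)
          · rw [if_neg hn2]; exact Or.inl rfl
      have hvm : ∀ j, occurs j ψ → infoLe (v' j) (m j) := by
        intro j hj
        have hjψ : j ∈ atomList ψ := (occurs_iff_mem j ψ).mp hj
        simp only [hmdef]
        by_cases h1 : j ∈ atomList φ
        · rw [if_pos h1]
          by_cases h2 : v' j = B4.n
          · rw [if_pos h2]; exact Or.inr (Or.inl h2)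
          · rw [if_neg h2, if_pos hjψ]; exact Or.inl rfl
        · rw [if_neg h1]; exact Or.inl rfl
      have hmφ : evalv m φ = B4.t := by
        have := eval_mono (θ := φ) hwm
        rw [hwφ] at this
        rcases this with hx | hx | hx
        · exact hx.symm
        · exact absurd hx (by decide)
        · exact absurd hx (eval_ne_b hmK)
      have hmψ : evalv m ψ = B4.f := by
        have := eval_mono (θ := ψ) hvm
        rw [hψf] at this
        rcases this with hx | hx | hx
        · exact hx.symm
        · exact absurd hx (by decide)
        · exact absurd hx (eval_ne_b hmK)
      set z : ℕ → B4 := fun j => if m j = B4.f then B4.f else B4.t with hzdef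
      have hzc : ∀ j, z j = B4.f ∨ z j = B4.t := by
        intro j
        simp only [hzdef]
        split_ifs <;> simp
      have hmz : ∀ j, infoLe (m j) (z j) := by
        have key : ∀ x : B4, x ≠ B4.b → infoLe x (if x = B4.f then B4.f else B4.t) := by decide
        intro j
        simp only [hzdef]
        exact key (m j) (hmK j)
      have hzφ : evalv z φ = B4.t := by
        have := eval_mono (θ := φ) (fun j _ => hmz j)
        rw [hmφ] at this
        rcases this with hx | hx | hx
        · exact hx.symm
        · exact absurd hx (by decide)
        · rcases eval_classical (θ := φ) hzc with hy | hy <;> simp_all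
      have hzψ : evalv z ψ = B4.f := by
        have := eval_mono (θ := ψ) (fun j _ => hmz j)
        rw [hmψ] at this
        rcases this with hx | hx | hx
        · exact hx.symm
        · exact absurd hx (by decide)
        · rcases eval_classical (θ := ψ) hzc with hy | hy <;> simp_all
      have := h z hzc (by intro γ hγ; rw [Set.mem_singleton_iff] at hγ; rw [hγ]; exact hzφ)
      rw [hzψ] at this
      exact absurd this (by decide)
    have hψb := eval_ne_b (θ := ψ) hv'K
    rw [hve ψ]
    cases hx : evalv v' ψ
    case f => exact absurd hx hψ'
    case n => exact Or.inr rfl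
    case b => exact absurd hx hψb
    case t => exact Or.inl rfl
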